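/- Let f be an automorphism of a tree T fixing no vertex and inverting no edge, and let m = min over vertices x of d(x, f(x)). Then for any vertex y achieving this minimum, the vertices fⁿ(y), n ∈ ℤ, all lie on a common line which is invariant under f. -/

import Mathlib

open SimpleGraph

private lemma aux_dist_getVert_le {V : Type*} (G : SimpleGraph V) {u v : V} (p : G.Walk u v)
    (hconn : G.Connected) : ∀ (i k : ℕ), G.dist (p.getVert i) (p.getVert (i + k)) ≤ k := by
  intro i k
  induction k with
  | zero => simp
  | succ k ih =>
    have htri := hconn.dist_triangle (u := p.getVert i) (v := p.getVert (i + k))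
      (w := p.getVert (i + k + 1))
    have hstep : G.dist (p.getVert (i + k)) (p.getVert (i + k + 1)) ≤ 1 := by
      by_cases h : i + k < p.length
      · exact le_of_eq (SimpleGraph.dist_eq_one_iff_adj.mpr (p.adj_getVert_succ h))
      · push_neg at h
        rw [p.getVert_of_length_le h, p.getVert_of_length_le (h.trans (Nat.le_succ _)),
          SimpleGraph.dist_self]
        exact Nat.zero_le 1
    calc G.dist (p.getVert i) (p.getVert (i + (k + 1)))
        = G.dist (p.getVert i) (p.getVert (i + k + 1)) := by ring_nf
      _ ≤ G.dist (p.getVert i) (p.getVert (i + k)) +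
          G.dist (p.getVert (i + k)) (p.getVert (i + k + 1)) := htri
      _ ≤ k + 1 := by omega

private lemma aux_geodesic_getVert {V : Type*} (G : SimpleGraph V) {u v : V} (p : G.Walk u v)
    (hconn : G.Connected) (hp : p.length = G.dist u v) {i j : ℕ} (hij : i ≤ j)
    (hj : j ≤ p.length) : G.dist (p.getVert i) (p.getVert j) = j - i := by
  have hub : G.dist (p.getVert i) (p.getVert j) ≤ j - i := by
    have := aux_dist_getVert_le G p hconn i (j - i)
    rwa [Nat.add_sub_cancel' hij] at this
  have h0 : G.dist u (p.getVert i) ≤ i := by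
    have := aux_dist_getVert_le G p hconn 0 i
    simpa [p.getVert_zero] using this
  have h1 : G.dist (p.getVert j) v ≤ p.length - j := by
    have := aux_dist_getVert_le G p hconn j (p.length - j)
    rwa [Nat.add_sub_cancel' hj, p.getVert_length] at this
  have htri : G.dist u v ≤ G.dist u (p.getVert i) +
      (G.dist (p.getVert i) (p.getVert j) + G.dist (p.getVert j) v) :=
    le_trans (hconn.dist_triangle) (by
      exact Nat.add_le_add_left (hconn.dist_triangle) _)
  omega

/-- In a tree, a neighbor of `z` is at distance `d x z ± 1` from any vertex `x`. -/
private lemma aux_adj_dist {V : Type*} (G : SimpleGraph V) (hT : G.IsTree) (x z w : V)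
    (hzw : G.Adj z w) :
    G.dist x w = G.dist x z + 1 ∨ G.dist x z = G.dist x w + 1 := by
  classical
  have hconn := hT.isConnected
  have h1 : G.dist x w ≤ G.dist x z + 1 := by
    have := hconn.dist_triangle (u := x) (v := z) (w := w)
    rwa [SimpleGraph.dist_eq_one_iff_adj.mpr hzw] at this
  have h2 : G.dist x z ≤ G.dist x w + 1 := by
    have := hconn.dist_triangle (u := x) (v := w) (w := z)
    rwa [SimpleGraph.dist_eq_one_iff_adj.mpr hzw.symm] at this
  rcases Nat.lt_trichotomy (G.dist x w) (G.dist x z) with h | h | h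
  · right; omega
  · -- impossible: equal distances
    exfalso
    set k := G.dist x z with hk
    obtain ⟨Q, hQ⟩ := (hconn x w).exists_walk_length_eq_dist
    have hQpath : Q.IsPath := Q.isPath_of_length_eq_dist hQ
    by_cases hz : z ∈ Q.support
    · have hsplit := Q.take_spec hz
      have hlen : (Q.takeUntil z hz).length + (Q.dropUntil z hz).length = Q.length := by
        rw [← SimpleGraph.Walk.length_append, hsplit]
      have hd1 : G.dist x z ≤ (Q.takeUntil z hz).length := SimpleGraph.dist_le _
      have hd2 : (Q.dropUntil z hz).length ≠ 0 := fun h0 =>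
        hzw.ne (SimpleGraph.Walk.eq_of_length_eq_zero h0)
      omega
    · have hzrev : z ∉ Q.reverse.support := by
        rwa [SimpleGraph.Walk.support_reverse, List.mem_reverse]
      have hRpath : (SimpleGraph.Walk.cons hzw Q.reverse).IsPath :=
        (hQpath.reverse).cons hzrev
      obtain ⟨P, hP⟩ := (hconn z x).exists_walk_length_eq_dist
      have hPpath : P.IsPath := P.isPath_of_length_eq_dist hP
      have := hT.IsAcyclic.path_unique ⟨P, hPpath⟩ ⟨SimpleGraph.Walk.cons hzw Q.reverse, hRpath⟩
      have hlen : P.length = (SimpleGraph.Walk.cons hzw Q.reverse).length :=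
        congrArg (SimpleGraph.Walk.length ∘ Subtype.val) this
      rw [SimpleGraph.Walk.length_cons, SimpleGraph.Walk.length_reverse] at hlen
      rw [hP, SimpleGraph.dist_comm] at hlen
      omega
  · left; omega

/-- In a tree, the neighbor of `z` closer to `x` is unique. -/
private lemma aux_unique_pred {V : Type*} (G : SimpleGraph V) (hT : G.IsTree) (x z w w' : V)
    (hzw : G.Adj z w) (hzw' : G.Adj z w')
    (hw : G.dist x z = G.dist x w + 1) (hw' : G.dist x z = G.dist x w' + 1) : w = w' := by
  have hconn := hT.isConnected
  obtain ⟨Q, hQ⟩ := (hconn w x).exists_walk_length_eq_dist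
  obtain ⟨Q', hQ'⟩ := (hconn w' x).exists_walk_length_eq_dist
  have hR : (SimpleGraph.Walk.cons hzw Q).length = G.dist z x := by
    rw [SimpleGraph.Walk.length_cons, hQ, SimpleGraph.dist_comm, ← hw, SimpleGraph.dist_comm]
  have hR' : (SimpleGraph.Walk.cons hzw' Q').length = G.dist z x := by
    rw [SimpleGraph.Walk.length_cons, hQ', SimpleGraph.dist_comm, ← hw', SimpleGraph.dist_comm]
  have hRp : (SimpleGraph.Walk.cons hzw Q).IsPath :=
    SimpleGraph.Walk.isPath_of_length_eq_dist _ hR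
  have hRp' : (SimpleGraph.Walk.cons hzw' Q').IsPath :=
    SimpleGraph.Walk.isPath_of_length_eq_dist _ hR'
  have heq := hT.IsAcyclic.path_unique ⟨SimpleGraph.Walk.cons hzw Q, hRp⟩
    ⟨SimpleGraph.Walk.cons hzw' Q', hRp'⟩
  have hwalk : SimpleGraph.Walk.cons hzw Q = SimpleGraph.Walk.cons hzw' Q' :=
    congrArg Subtype.val heq
  have hgv := congrArg (fun t : G.Walk z x => t.getVert 1) hwalk
  have e1 : (SimpleGraph.Walk.cons hzw Q).getVert 1 = w := by
    show Q.getVert 0 = w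
    exact Q.getVert_zero
  have e2 : (SimpleGraph.Walk.cons hzw' Q').getVert 1 = w' := by
    show Q'.getVert 0 = w'
    exact Q'.getVert_zero
  have hgv2 : (SimpleGraph.Walk.cons hzw Q).getVert 1 =
      (SimpleGraph.Walk.cons hzw' Q').getVert 1 := hgv
  rw [e1, e2] at hgv2
  exact hgv2

/-- Powers of the underlying permutation of a graph automorphism preserve adjacency. -/
private lemma aux_zpow_adj {V : Type*} {G : SimpleGraph V} (f : G ≃g G) (q : ℤ) :
    ∀ {u v : V}, G.Adj u v → G.Adj ((f.toEquiv ^ q) u) ((f.toEquiv ^ q) v) := by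
  induction q using Int.induction_on with
  | zero => intro u v h; simpa using h
  | succ k ih =>
    intro u v h
    have h1 : f.toEquiv ^ ((k : ℤ) + 1) = f.toEquiv ^ (k : ℤ) * f.toEquiv := zpow_add_one _ _
    rw [h1]
    exact ih (f.map_adj_iff.mpr h)
  | pred k ih =>
    intro u v h
    have hfa : ∀ a : V, (⇑f) a = f.toEquiv a := fun _ => rfl
    have h2 := f.map_adj_iff (v := f.toEquiv⁻¹ u) (w := f.toEquiv⁻¹ v)
    rw [hfa, hfa, Equiv.Perm.coe_inv, Equiv.apply_symm_apply, Equiv.apply_symm_apply] at h2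
    have h4 := ih (h2.mp h)
    have h1 : f.toEquiv ^ (-(k : ℤ) - 1) = f.toEquiv ^ (-(k : ℤ)) * f.toEquiv⁻¹ :=
      zpow_sub_one _ _
    rw [h1]
    exact h4

/-- Let `f` be an automorphism of a tree `T` fixing no vertex and inverting no edge,
and let `y` be a vertex minimizing `d(x, f x)`.  Then all the vertices `fⁿ y`, `n ∈ ℤ`,
lie on a common line which is invariant under `f`. -/
theorem min_displacement_on_axis {V : Type*} (G : SimpleGraph V) (hT : G.IsTree)
    (f : G ≃g G)
    (hfix : ∀ v : V, f v ≠ v)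
    (hinv : ∀ u v : V, G.Adj u v → ¬(f u = v ∧ f v = u))
    (y : V) (hy : ∀ x : V, G.dist y (f y) ≤ G.dist x (f x)) :
    ∃ c : ℤ → V,
      (Function.Injective c ∧ ∀ n : ℤ, G.Adj (c n) (c (n + 1))) ∧
      (∃ d : ℤ, d ≠ 0 ∧ ∀ n : ℤ, f (c n) = c (n + d)) ∧
      ∀ n : ℤ, (f.toEquiv ^ n) y ∈ Set.range c := by
  have hconn := hT.isConnected
  set σ := f.toEquiv with hσ
  have hfσ : ∀ a : V, (⇑f) a = σ a := fun _ => rfl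
  set m : ℕ := G.dist y (f y) with hm
  have hmpos : 0 < m := hconn.pos_dist_of_ne (fun h => hfix y h.symm)
  set M : ℤ := (m : ℤ) with hM
  have hMpos : 0 < M := by rw [hM]; exact_mod_cast hmpos
  obtain ⟨p, hp⟩ := (hconn y (f y)).exists_walk_length_eq_dist
  have hplen : p.length = m := hp
  -- the axis
  set c : ℤ → V := fun n => (σ ^ (n / M)) (p.getVert (n % M).toNat) with hc
  -- commuting powers
  have hcomm : ∀ (q : ℤ) (x : V), σ ((σ ^ q) x) = (σ ^ (q + 1)) x := by
    intro q x
    have : σ ^ (q + 1) = σ * σ ^ q := by rw [add_comm]; exact zpow_one_add _ _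
    rw [this, Equiv.Perm.mul_apply]
  have hcomm2 : ∀ (q : ℤ) (x : V), (σ ^ q) (σ x) = (σ ^ (q + 1)) x := by
    intro q x
    rw [zpow_add_one, Equiv.Perm.mul_apply]
  -- representation lemma
  have crep : ∀ (q : ℤ) (r : ℕ), r ≤ m → c (q * M + r) = (σ ^ q) (p.getVert r) := by
    intro q r hr
    rcases lt_or_eq_of_le hr with hr' | hr'
    · have hdiv : (q * M + (r : ℤ)) / M = q := by
        rw [add_comm, Int.add_mul_ediv_right _ _ (ne_of_gt hMpos),
          Int.ediv_eq_zero_of_lt (by positivity) (by rw [hM]; exact_mod_cast hr'), zero_add]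
      have hmod : (q * M + (r : ℤ)) % M = r := by
        rw [add_comm, Int.add_mul_emod_self_right,
          Int.emod_eq_of_lt (by positivity) (by rw [hM]; exact_mod_cast hr')]
      simp only [hc, hdiv, hmod, Int.toNat_natCast]
    · subst hr'
      have hqM : q * M + (m : ℤ) = (q + 1) * M := by rw [hM]; ring
      have hdiv : ((q + 1) * M) / M = q + 1 := Int.mul_ediv_cancel _ (ne_of_gt hMpos)
      have hmod : ((q + 1) * M) % M = 0 := Int.mul_emod_left _ _
      have h0 : c (q * M + (m : ℤ)) = (σ ^ (q + 1)) y := by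
        simp only [hc, hqM, hdiv, hmod, Int.toNat_zero, p.getVert_zero]
      have hgv : p.getVert m = f y := by rw [← hplen]; exact p.getVert_length
      rw [h0, hgv, hfσ, hcomm2]
  -- decomposition of any integer
  have hdec : ∀ n : ℤ, ∃ (q : ℤ) (r : ℕ), n = q * M + r ∧ r < m := by
    intro n
    refine ⟨n / M, (n % M).toNat, ?_, ?_⟩
    · rw [Int.toNat_of_nonneg (Int.emod_nonneg n (ne_of_gt hMpos))]
      rw [mul_comm]
      exact (Int.mul_ediv_add_emod n M).symm
    · have := Int.emod_lt_of_pos n hMpos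
      omega
  -- getVert distances along p
  have dGet : ∀ {i j : ℕ}, i ≤ j → j ≤ m → G.dist (p.getVert i) (p.getVert j) = j - i := by
    intro i j hij hj
    exact aux_geodesic_getVert G p hconn (by rw [hplen, hm]) hij (by omega)
  -- adjacency along c
  have hadj : ∀ n : ℤ, G.Adj (c n) (c (n + 1)) := by
    intro n
    obtain ⟨q, r, rfl, hr⟩ := hdec n
    have h1 : c (q * M + r) = (σ ^ q) (p.getVert r) := crep q r (le_of_lt hr)
    have h2 : c (q * M + r + 1) = (σ ^ q) (p.getVert (r + 1)) := by
      have : q * M + (r : ℤ) + 1 = q * M + ((r + 1 : ℕ) : ℤ) := by push_cast; ring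
      rw [this]; exact crep q (r + 1) (by omega)
    rw [h1, h2]
    exact aux_zpow_adj f q (p.adj_getVert_succ (by omega))
  -- no U-turns
  have hnoU : ∀ n : ℤ, c (n + 2) ≠ c n := by
    intro n
    obtain ⟨q, r, rfl, hr⟩ := hdec n
    by_cases hcase : r + 2 ≤ m
    · have h1 : c (q * M + r) = (σ ^ q) (p.getVert r) := crep q r (by omega)
      have h2 : c (q * M + r + 2) = (σ ^ q) (p.getVert (r + 2)) := by
        have : q * M + (r : ℤ) + 2 = q * M + ((r + 2 : ℕ) : ℤ) := by push_cast; ring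
        rw [this]; exact crep q (r + 2) hcase
      rw [h1, h2]
      intro heq
      have heq' : p.getVert (r + 2) = p.getVert r := (σ ^ q).injective heq
      have hd : G.dist (p.getVert r) (p.getVert (r + 2)) = 2 := by
        have := dGet (i := r) (j := r + 2) (by omega) hcase
        omega
      rw [heq', SimpleGraph.dist_self] at hd
      exact absurd hd (by norm_num)
    · -- r = m - 1
      have hrm : r = m - 1 := by omega
      by_cases hm1 : m = 1
      · -- m = 1 : r = 0, n = q*M, n+2 = (q+2)*M
        have hr0 : r = 0 := by omega
        subst hr0
        have h1 : c (q * M + (0 : ℕ)) = (σ ^ q) y := by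
          rw [crep q 0 (by omega), p.getVert_zero]
        have h2 : c (q * M + (0 : ℕ) + 2) = (σ ^ (q + 2)) y := by
          have he : q * M + ((0 : ℕ) : ℤ) + 2 = (q + 2) * M + ((0 : ℕ) : ℤ) := by
            rw [hM, hm1]; push_cast; ring
          rw [he, crep (q + 2) 0 (by omega), p.getVert_zero]
        rw [h1, h2]
        intro heq
        have h3 : (σ ^ (q + 2)) y = (σ ^ q) ((σ ^ (2 : ℤ)) y) := by
          rw [← Equiv.Perm.mul_apply, ← zpow_add, add_comm]
        rw [h3] at heq
        have h4 : (σ ^ (2 : ℤ)) y = y := (σ ^ q).injective heq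
        have h5 : f (f y) = y := by
          rw [hfσ, hfσ]
          calc σ (σ y) = (σ ^ (2 : ℤ)) y := by
                rw [show (2 : ℤ) = 1 + 1 by norm_num, zpow_add, zpow_one, Equiv.Perm.mul_apply]
            _ = y := h4
        have hadjy : G.Adj y (f y) := by
          rw [← SimpleGraph.dist_eq_one_iff_adj, ← hm, hm1]
        exact hinv y (f y) hadjy ⟨rfl, h5⟩
      · -- m ≥ 2
        have hm2 : 2 ≤ m := by omega
        have h1 : c (q * M + r) = (σ ^ q) (p.getVert (m - 1)) := by
          rw [crep q r (by omega), hrm]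
        have h2 : c (q * M + r + 2) = (σ ^ q) (σ (p.getVert 1)) := by
          have hr2 : (r : ℤ) = (m : ℤ) - 1 := by omega
          have he : q * M + (r : ℤ) + 2 = (q + 1) * M + ((1 : ℕ) : ℤ) := by
            rw [hM]; push_cast; linear_combination hr2
          rw [he, crep (q + 1) 1 (by omega), hcomm2]
        rw [h1, h2]
        intro heq
        have heq' : σ (p.getVert 1) = p.getVert (m - 1) := (σ ^ q).injective heq
        -- displacement of p.getVert 1 is m - 2 < m
        have hd : G.dist (p.getVert 1) (p.getVert (m - 1)) = m - 2 := by
          have := dGet (i := 1) (j := m - 1) (by omega) (by omega)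
          omega
        have : G.dist (p.getVert 1) (f (p.getVert 1)) = m - 2 := by
          show G.dist (p.getVert 1) (σ (p.getVert 1)) = m - 2
          rw [heq']; exact hd
        have := hy (p.getVert 1)
        omega
  -- distances along c
  have hdist : ∀ k : ℕ, ∀ n : ℤ, G.dist (c n) (c (n + k)) = k := by
    intro k
    induction k using Nat.strong_induction_on with
    | _ k ih =>
      match k with
      | 0 => intro n; simp
      | 1 =>
        intro n
        have := hadj n
        rw [SimpleGraph.dist_eq_one_iff_adj]
        exact_mod_cast this
      | (k + 2) =>
        intro n
        have ih1 : G.dist (c n) (c (n + (k + 1 : ℕ))) = k + 1 := ih (k + 1) (by omega) n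
        have ih0 : G.dist (c n) (c (n + (k : ℕ))) = k := ih k (by omega) n
        have hzw : G.Adj (c (n + (k + 1 : ℕ))) (c (n + (k + 2 : ℕ))) := by
          have := hadj (n + (k + 1 : ℕ))
          have he : n + ((k + 1 : ℕ) : ℤ) + 1 = n + ((k + 2 : ℕ) : ℤ) := by push_cast; ring
          rwa [he] at this
        have hzw' : G.Adj (c (n + (k + 1 : ℕ))) (c (n + (k : ℕ))) := by
          have := hadj (n + (k : ℕ))
          have he : n + ((k : ℕ) : ℤ) + 1 = n + ((k + 1 : ℕ) : ℤ) := by push_cast; ring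
          rw [he] at this
          exact this.symm
        rcases aux_adj_dist G hT (c n) (c (n + (k + 1 : ℕ))) (c (n + (k + 2 : ℕ))) hzw with
          h | h
        · omega
        · exfalso
          have hww : c (n + (k + 2 : ℕ)) = c (n + (k : ℕ)) := by
            apply aux_unique_pred G hT (c n) (c (n + (k + 1 : ℕ))) _ _ hzw hzw'
            · omega
            · omega
          have := hnoU (n + (k : ℕ))
          have he : n + ((k : ℕ) : ℤ) + 2 = n + ((k + 2 : ℕ) : ℤ) := by push_cast; ring
          rw [he] at this
          exact this hww
  refine ⟨c, ⟨?_, hadj⟩, ⟨M, ne_of_gt hMpos, ?_⟩, ?_⟩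
  · -- injectivity
    intro a b hab
    by_contra hne
    wlog hlt : a < b generalizing a b
    · exact this hab.symm (Ne.symm hne) (by omega)
    have hk : b = a + ((b - a).toNat : ℤ) := by omega
    have := hdist (b - a).toNat a
    rw [← hk, hab, SimpleGraph.dist_self] at this
    omega
  · -- f-invariance
    intro n
    obtain ⟨q, r, rfl, hr⟩ := hdec n
    have h1 : c (q * M + r) = (σ ^ q) (p.getVert r) := crep q r (le_of_lt hr)
    have h2 : c (q * M + r + M) = (σ ^ (q + 1)) (p.getVert r) := by
      have he : q * M + (r : ℤ) + M = (q + 1) * M + (r : ℤ) := by ring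
      rw [he]; exact crep (q + 1) r (le_of_lt hr)
    rw [h1, h2, hfσ, hcomm]
  · -- range contains the orbit of y
    intro n
    refine ⟨n * M, ?_⟩
    have := crep n 0 (by omega)
    rw [p.getVert_zero] at this
    simpa using this
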